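/- arXiv:1104.2309 — 3 statements merged into one kernel-verified Lean document; each statement's English description precedes it below -/
import Mathlib

section
/- Let $(X,\pi,\{p_\alpha\}_{\alpha\in\pi})$ be a pointed proper $\pi$-space, i.e. $X$ is a metric space in which closed balls are compact, $\pi$ acts by isometries $T_\alpha$ cocompactly and properly discontinuously, and $T_\alpha p_\beta = p_{\alpha\beta}$. Let $F^t: X \to X$ ($t \in [0,1]$) be a homotopy with $F^0 = \mathrm{id}_X$ and $F^1(X) \subseteq K$ for a compact set $K$. For a finite subset $P \subset \pi$, a total order $\sigma$ on $P$, parameters $t_\alpha \in [0,1]$, and $x \in X$, define $W_F(\{t_\alpha\},\sigma,x) = (\prod_{\alpha \in P, \text{ ordered by } \sigma} T_\alpha \circ F^{t_\alpha} \circ T_\alpha^{-1})(x)$. Then for every $N < \infty$ there exists $M < \infty$ such that: if $d(p_\alpha, x) < N$ for all $\alpha$ with $t_\alpha \neq 0$, then $d(W_F(\{t_\alpha\},\sigma,x), x) < M$. -/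
open Metric

/-- A pointed proper `π`-space: a metric space `X` in which closed balls are compact,
with a group `π` acting by isometries, cocompactly and properly discontinuously, together
with points `p α` satisfying `T α (p β) = p (α * β)`. -/
structure PointedProperPiSpace (π : Type*) [Group π] (X : Type*) [MetricSpace X] where
  /-- the action of `π` on `X` by isometries -/
  T : π → X ≃ᵢ X
  /-- `T α ∘ T β = T (α * β)` -/
  hmul : ∀ α β : π, ∀ x : X, T α (T β x) = T (α * β) x
  /-- the marked points -/
  p : π → X
  /-- equivariance of the marked points -/
  hp : ∀ α β : π, T α (p β) = p (α * β)
  /-- closed metric balls are compact -/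
  properBalls : ∀ (x : X) (r : ℝ), IsCompact (Metric.closedBall x r)
  /-- the action is cocompact -/
  cocompact : ∃ K : Set X, IsCompact K ∧ ∀ x : X, ∃ α : π, T α x ∈ K
  /-- the action is properly discontinuous -/
  properlyDisc : ∀ K : Set X, IsCompact K → {α : π | ((T α) '' K ∩ K).Nonempty}.Finite

/-- The function `W_F({t_α}, σ, x)`: the composition, in the order given by the list `L`
(which records a finite subset of `π` together with a total order `σ` on it), of the maps
`T α ∘ F^{t α} ∘ T α⁻¹`, applied to `x`.  Since `F^0 = id`, elements with `t α = 0`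
contribute the identity, so this models the function on the direct limit over all finite
ordered subsets of `π`. -/
def Wfunc {π : Type*} [Group π] {X : Type*} [MetricSpace X]
    (S : PointedProperPiSpace π X) (F : ℝ → X → X) (t : π → ℝ) : List π → X → X
  | [], x => x
  | α :: L, x => S.T α (F (t α) ((S.T α).symm (Wfunc S F t L x)))

/-- for a pointed proper `π`-space (normalized so that the unit balls around the
`p α` cover `X`), a homotopy `F` from the identity to a map with image in a compact set `K`,
for every `N < ∞` there is `M < ∞` such that whenever `d(p α, x) < N` for all `α` in the
support of `t`, one has `d(W_F({t_α}, σ, x), x) < M`. -/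
theorem Wfunc_bounded_displacement
    {π : Type*} [Group π] {X : Type*} [MetricSpace X]
    (S : PointedProperPiSpace π X)
    (hcover : ∀ x : X, ∃ α : π, dist (S.p α) x ≤ 1)
    (F : ℝ → X → X)
    (hFcont : Continuous fun q : ℝ × X => F q.1 q.2)
    (hF0 : ∀ x : X, F 0 x = x)
    (K : Set X) (hK : IsCompact K) (hF1 : ∀ x : X, F 1 x ∈ K) :
    ∀ N : ℝ, ∃ M : ℝ, ∀ (L : List π), L.Nodup → ∀ (t : π → ℝ),
      (∀ α : π, t α ∈ Set.Icc (0 : ℝ) 1) →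
      ∀ x : X, (∀ α ∈ L, t α ≠ 0 → dist (S.p α) x < N) →
      dist (Wfunc S F t L x) x < M := by

  classical
  intro N
  -- A bound for the displacement of F on closed balls around p 1
  have hCex : ∀ r : ℝ, ∃ C : ℝ, 0 ≤ C ∧ ∀ s ∈ Set.Icc (0:ℝ) 1,
      ∀ z ∈ Metric.closedBall (S.p 1) r, dist (F s z) z ≤ C := by
    intro r
    have hcomp : IsCompact ((Set.Icc (0:ℝ) 1) ×ˢ Metric.closedBall (S.p 1) r) :=
      isCompact_Icc.prod (S.properBalls _ _)
    have hf : Continuous fun q : ℝ × X => dist (F q.1 q.2) q.2 :=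
      hFcont.dist continuous_snd
    obtain ⟨C, hC⟩ := (hcomp.image hf).bddAbove
    refine ⟨max C 0, le_max_right _ _, ?_⟩
    intro s hs z hz
    exact le_trans (hC ⟨⟨s, z⟩, ⟨hs, hz⟩, rfl⟩) (le_max_left _ _)
  choose C hC0 hCb using hCex
  -- the recursive bound
  set D : ℕ → ℝ := fun n => Nat.rec 0 (fun _ d => d + C (N + d)) n with hDdef
  have hD0 : D 0 = 0 := rfl
  have hDs : ∀ n, D (n+1) = D n + C (N + D n) := fun n => rfl
  have hDmono : Monotone D := monotone_nat_of_le_succ fun n => by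
    rw [hDs]; linarith [hC0 (N + D n)]
  -- finiteness of nearby translates
  have hA : {γ : π | dist (S.p γ) (S.p 1) < N + 1}.Finite := by
    refine (S.properlyDisc (Metric.closedBall (S.p 1) (N+1)) (S.properBalls _ _)).subset ?_
    intro γ hγ
    have hγ' : dist (S.p γ) (S.p 1) < N + 1 := hγ
    have h0 : (0:ℝ) ≤ N + 1 := le_trans dist_nonneg hγ'.le
    refine ⟨S.p γ, ⟨⟨S.p 1, ?_, ?_⟩, ?_⟩⟩
    · simpa [Metric.mem_closedBall] using h0
    · rw [S.hp, mul_one]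
    · simpa [Metric.mem_closedBall] using hγ'.le
  refine ⟨D hA.toFinset.card + 1, ?_⟩
  intro L hLnd t ht x hx
  -- main induction
  have key : ∀ L' : List π, (∀ α ∈ L', t α ≠ 0 → dist (S.p α) x < N) →
      dist (Wfunc S F t L' x) x ≤ D ((L'.filter (fun α => decide (t α ≠ 0))).length) := by
    intro L'
    induction L' with
    | nil => intro _; simp [Wfunc, hD0]
    | cons α L'' ih =>
      intro hx'
      have hxt : ∀ β ∈ L'', t β ≠ 0 → dist (S.p β) x < N :=
        fun β hβ => hx' β (List.mem_cons_of_mem _ hβ)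
      have ihy := ih hxt
      set y := Wfunc S F t L'' x with hy
      by_cases h0 : t α = 0
      · have hW : Wfunc S F t (α :: L'') x = y := by
          simp [Wfunc, h0, hF0, ← hy]
        have hcnt : ((α :: L'').filter (fun α => decide (t α ≠ 0))).length
            = (L''.filter (fun α => decide (t α ≠ 0))).length := by
          simp [List.filter_cons, h0]
        rw [hW, hcnt]; exact ihy
      · have hd : dist (S.p α) x < N := hx' α List.mem_cons_self h0
        set n := (L''.filter (fun α => decide (t α ≠ 0))).length with hn
        set z := (S.T α).symm y with hz
        have hzy : S.T α z = y := (S.T α).apply_symm_apply y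
        have hW : Wfunc S F t (α :: L'') x = S.T α (F (t α) z) := rfl
        have hcnt : ((α :: L'').filter (fun α => decide (t α ≠ 0))).length = n + 1 := by
          simp [List.filter_cons, h0, hn]
        have h1 : dist z ((S.T α).symm x) = dist y x := (S.T α).symm.dist_eq y x
        have h2 : dist ((S.T α).symm x) (S.p 1) < N := by
          have hxx : dist x (S.T α (S.p 1)) < N := by
            rw [S.hp, mul_one, dist_comm]; exact hd
          calc dist ((S.T α).symm x) (S.p 1)
              = dist (S.T α ((S.T α).symm x)) (S.T α (S.p 1)) := ((S.T α).dist_eq _ _).symm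
            _ = dist x (S.T α (S.p 1)) := by rw [(S.T α).apply_symm_apply]
            _ < N := hxx
        have hzball : z ∈ Metric.closedBall (S.p 1) (N + D n) := by
          rw [Metric.mem_closedBall]
          calc dist z (S.p 1) ≤ dist z ((S.T α).symm x) + dist ((S.T α).symm x) (S.p 1) :=
                dist_triangle _ _ _
            _ ≤ D n + N := by rw [h1]; exact add_le_add ihy h2.le
            _ = N + D n := by ring
        have hdisp : dist (S.T α (F (t α) z)) y ≤ C (N + D n) := by
          calc dist (S.T α (F (t α) z)) y = dist (S.T α (F (t α) z)) (S.T α z) := by rw [hzy]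
            _ = dist (F (t α) z) z := (S.T α).dist_eq _ _
            _ ≤ C (N + D n) := hCb _ (t α) (ht α) z hzball
        rw [hW, hcnt, hDs]
        calc dist (S.T α (F (t α) z)) x ≤ dist (S.T α (F (t α) z)) y + dist y x :=
              dist_triangle _ _ _
          _ ≤ C (N + D n) + D n := add_le_add hdisp ihy
          _ = D n + C (N + D n) := by ring
  -- bound the number of active elements
  have hcard : ((L.filter (fun α => decide (t α ≠ 0))).length) ≤ hA.toFinset.card := by
    obtain ⟨β, hβ⟩ := hcover x
    have hnd : (L.filter (fun α => decide (t α ≠ 0))).Nodup := hLnd.filter _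
    rw [← List.toFinset_card_of_nodup hnd]
    apply Finset.card_le_card_of_injOn (fun γ => β⁻¹ * γ)
    · intro γ hγ
      rw [Finset.mem_coe, List.mem_toFinset, List.mem_filter] at hγ
      have h1 : t γ ≠ 0 := of_decide_eq_true hγ.2
      have h2 : dist (S.p γ) x < N := hx γ hγ.1 h1
      rw [Finset.mem_coe, Set.Finite.mem_toFinset]
      show dist (S.p (β⁻¹ * γ)) (S.p 1) < N + 1
      have heq : dist (S.p (β⁻¹ * γ)) (S.p 1) = dist (S.p γ) (S.p β) := by
        rw [← S.hp β⁻¹ γ, ← inv_mul_cancel β, ← S.hp β⁻¹ β]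
        exact (S.T β⁻¹).dist_eq _ _
      rw [heq]
      calc dist (S.p γ) (S.p β) ≤ dist (S.p γ) x + dist x (S.p β) := dist_triangle _ _ _
        _ < N + 1 := add_lt_add_of_lt_of_le h2 (by rwa [dist_comm])
    · intro a _ b _ h
      exact mul_left_cancel h
  calc dist (Wfunc S F t L x) x ≤ D ((L.filter (fun α => decide (t α ≠ 0))).length) := key L hx
    _ ≤ D hA.toFinset.card := hDmono hcard
    _ < D hA.toFinset.card + 1 := by linarith
end

section
/- Let $(X,\pi,\{p_\alpha\})$ be a pointed proper $\pi$-space, $F^t$ a homotopy from $\mathrm{id}_X$ to a map with image in a compact set $K$, and $W_F$ the associated composition operator. For a total order $\sigma$ on $\pi$ and $\gamma \in \pi$, define the order $\sigma^\gamma$ by $\beta_1 \prec_{\sigma^\gamma} \beta_2 \iff \gamma\beta_1 \prec_\sigma \gamma\beta_2$. Then the equivariance identity holds: $W_F(\{t_\alpha\}_{\alpha\in\pi}, \sigma, x) = T_\gamma\, W_F(\{t_{\gamma\alpha}\}_{\alpha\in\pi}, \sigma^\gamma, T_\gamma^{-1} x)$. -/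
open Metric

lemma T_one {π : Type*} [Group π] {X : Type*} [MetricSpace X]
    (S : PointedProperPiSpace π X) (x : X) : S.T 1 x = x := by
  have h := S.hmul 1 1 x
  rw [one_mul] at h
  exact (S.T 1).injective h

lemma T_symm {π : Type*} [Group π] {X : Type*} [MetricSpace X]
    (S : PointedProperPiSpace π X) (α : π) (x : X) : (S.T α).symm x = S.T α⁻¹ x := by
  apply (S.T α).injective
  simp [S.hmul, T_one]

/-- the equivariance identity
`W_F({t_α}, σ, x) = T γ (W_F({t_{γα}}, σ^γ, T γ⁻¹ x))`.
Here the finite ordered set `(P, σ)` is encoded by the list `L`, and the order `σ^γ`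
(defined by `β₁ ≺_{σ^γ} β₂ ↔ γβ₁ ≺_σ γβ₂`) on `γ⁻¹ P` is encoded by `L.map (γ⁻¹ * ·)`. -/
theorem Wfunc_equivariance
    {π : Type*} [Group π] {X : Type*} [MetricSpace X]
    (S : PointedProperPiSpace π X)
    (F : ℝ → X → X)
    (hFcont : Continuous fun q : ℝ × X => F q.1 q.2)
    (hF0 : ∀ x : X, F 0 x = x)
    (K : Set X) (hK : IsCompact K) (hF1 : ∀ x : X, F 1 x ∈ K)
    (L : List π) (hL : L.Nodup) (t : π → ℝ)
    (ht : ∀ α : π, t α ∈ Set.Icc (0 : ℝ) 1)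
    (γ : π) (x : X) :
    Wfunc S F t L x =
      S.T γ (Wfunc S F (fun α => t (γ * α)) (L.map fun α => γ⁻¹ * α) ((S.T γ).symm x)) := by
  induction L with
  | nil => simp [Wfunc, (S.T γ).apply_symm_apply]
  | cons α L ih =>
    simp only [List.map_cons, Wfunc]
    rw [S.hmul, mul_inv_cancel_left]
    have h : (S.T α).symm (Wfunc S F t L x)
        = (S.T (γ⁻¹ * α)).symm
          (Wfunc S F (fun β => t (γ * β)) (List.map (fun β => γ⁻¹ * β) L) ((S.T γ).symm x)) := by
      rw [ih (List.nodup_cons.mp hL).2, T_symm, T_symm, S.hmul, T_symm, mul_inv_rev, inv_inv]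
    rw [h]
end

section
/- Let $(X,\pi)$ be a proper $\pi$-space (metric space with compact closed balls, cocompact properly discontinuous isometric $\pi$-action) and suppose $X$ is contractible. Then there exists a continuous function $R : X \times X \times [0,1] \to X$ with $R(x,y,0) = x$, $R(x,y,1) = y$, such that for every $N < \infty$ there exists $M < \infty$ with: $d(x,y) < N$ implies $d(x, R(x,y,t)) < M$ for all $t \in [0,1]$. (A 'coarse homotopy' connecting pairs of points with uniformly bounded tracks.) -/
noncomputable section
set_option linter.unusedSectionVars false
namespace CoarseHtpyAux

open Set Metric

/-- clamp to [0,1] -/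
def clamp01 (v : ℝ) : ℝ := max 0 (min 1 v)

lemma clamp01_mem (v : ℝ) : clamp01 v ∈ Icc (0:ℝ) 1 :=
  ⟨le_max_left _ _, max_le (by norm_num) (min_le_left _ _)⟩

lemma clamp01_cont : Continuous clamp01 :=
  continuous_const.max (continuous_const.min continuous_id)

@[simp] lemma clamp01_zero : clamp01 0 = 0 := by simp [clamp01]

lemma clamp01_of_nonpos {v : ℝ} (h : v ≤ 0) : clamp01 v = 0 := by
  simp only [clamp01, max_eq_left_iff]
  exact (min_le_right _ _).trans h

lemma clamp01_of_one_le {v : ℝ} (h : 1 ≤ v) : clamp01 v = 1 := by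
  simp only [clamp01, min_eq_left h, max_eq_right_iff]; norm_num

def umin (s : ℝ) : ℝ := min (2*s) (2-2*s)

lemma umin_cont : Continuous umin := by
  unfold umin; fun_prop

@[simp] lemma umin_zero : umin 0 = 0 := by norm_num [umin]

@[simp] lemma umin_one : umin 1 = 0 := by norm_num [umin]

lemma umin_half : umin 2⁻¹ = 1 := by norm_num [umin]

lemma ramp_cont : Continuous fun p : ℝ × ℝ => clamp01 (3 * p.1 / p.2) * umin p.2 := by
  rw [continuous_iff_continuousAt]
  rintro ⟨θ₀, s₀⟩
  by_cases hs : s₀ = 0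
  · have hval : clamp01 (3 * θ₀ / s₀) * umin s₀ = 0 := by
      rw [hs]; simp
    unfold ContinuousAt
    simp only []
    rw [show (clamp01 (3 * (θ₀, s₀).1 / (θ₀, s₀).2) * umin (θ₀, s₀).2) = 0 from hval]
    apply squeeze_zero_norm (a := fun p : ℝ × ℝ => |umin p.2|)
    · rintro ⟨θ, s⟩
      have h1 : |clamp01 (3 * θ / s)| ≤ 1 := by
        have := clamp01_mem (3 * θ / s)
        rw [abs_le]; constructor <;> nlinarith [this.1, this.2]
      calc ‖clamp01 (3 * θ / s) * umin s‖ = |clamp01 (3 * θ / s)| * |umin s| := abs_mul _ _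
        _ ≤ 1 * |umin s| := by nlinarith [abs_nonneg (umin s)]
        _ = |umin s| := one_mul _
    · have : Continuous fun p : ℝ × ℝ => |umin p.2| :=
        continuous_abs.comp (umin_cont.comp continuous_snd)
      have ht := this.continuousAt (x := (θ₀, s₀))
      unfold ContinuousAt at ht
      simpa [hs] using ht
  · apply ContinuousAt.mul
    · exact (clamp01_cont.continuousAt).comp
        ((continuousAt_const.mul continuousAt_fst).div continuousAt_snd hs)
    · exact (umin_cont.continuousAt).comp continuousAt_snd


variable {X : Type*} [MetricSpace X]

/-- canonical path from `a` to `b` through the contraction `H'` -/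
def gpath (H' : X → ℝ → X) (a b : X) (t : ℝ) : X :=
  if t ≤ 2⁻¹ then H' a (2*t) else H' b (2-2*t)

section gpath
variable {H' : X → ℝ → X} {c : X}

lemma gpath_cont (hH : Continuous fun p : X × ℝ => H' p.1 p.2)
    (h1 : ∀ z u, (1:ℝ) ≤ u → H' z u = c) :
    Continuous fun p : X × X × ℝ => gpath H' p.1 p.2.1 p.2.2 := by
  unfold gpath
  apply Continuous.if_le
  · exact hH.comp (continuous_fst.prodMk (continuous_const.mul continuous_snd.snd))
  · exact hH.comp (continuous_snd.fst.prodMk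
      (continuous_const.sub (continuous_const.mul continuous_snd.snd)))
  · exact continuous_snd.snd
  · exact continuous_const
  · intro p hp
    rw [h1 _ _ (by rw [hp]; norm_num), h1 _ _ (by rw [hp]; norm_num)]

lemma gpath_of_nonpos (h0 : ∀ z u, u ≤ (0:ℝ) → H' z u = z) (a b : X) {t : ℝ} (ht : t ≤ 0) :
    gpath H' a b t = a := by
  unfold gpath
  rw [if_pos (ht.trans (by norm_num))]
  exact h0 _ _ (by linarith)

lemma gpath_of_one_le (h0 : ∀ z u, u ≤ (0:ℝ) → H' z u = z) (a b : X) {t : ℝ} (ht : 1 ≤ t) :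
    gpath H' a b t = b := by
  unfold gpath
  rw [if_neg (by intro h; nlinarith)]
  exact h0 _ _ (by linarith)

lemma gpath_cases (a b : X) (t : ℝ) :
    ∃ v, gpath H' a b t = H' a v ∨ gpath H' a b t = H' b v := by
  unfold gpath
  split
  · exact ⟨2*t, Or.inl rfl⟩
  · exact ⟨2-2*t, Or.inr rfl⟩

end gpath

/-- one blending step of the construction -/
def step (H' : X → ℝ → X) (g : X ≃ᵢ X) (lam : X → ℝ) (F : X → X → ℝ → X)
    (x y : X) (t : ℝ) : X :=
  if t ≤ lam x / 3 then g.symm (H' (g x) (clamp01 (3*t/(lam x)) * umin (lam x)))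
  else if t ≤ 1 - lam x / 3 then
    (if lam x ≤ 2⁻¹ then
      g.symm (H' (g (F x y ((t - lam x/3)/(1 - 2*(lam x)/3)))) (umin (lam x)))
     else
      g.symm (H' (gpath H' (g x) (g y) ((t - lam x/3)/(1 - 2*(lam x)/3))) (umin (lam x))))
  else g.symm (H' (g y) (clamp01 (3*(1-t)/(lam x)) * umin (lam x)))

section step
variable {H' : X → ℝ → X} {c : X} {g : X ≃ᵢ X} {lam : X → ℝ} {F : X → X → ℝ → X}

lemma step_of_nonpos (h0 : ∀ z u, u ≤ (0:ℝ) → H' z u = z)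
    (hlam01 : ∀ x, lam x ∈ Icc (0:ℝ) 1) (x y : X) {t : ℝ} (ht : t ≤ 0) :
    step H' g lam F x y t = x := by
  have h3 : t ≤ lam x / 3 := ht.trans (by linarith [(hlam01 x).1])
  rw [step, if_pos h3]
  have hcl : clamp01 (3*t/(lam x)) = 0 := by
    rcases eq_or_lt_of_le (hlam01 x).1 with h | h
    · rw [← h, div_zero, clamp01_zero]
    · exact clamp01_of_nonpos (div_nonpos_of_nonpos_of_nonneg (by linarith) (hlam01 x).1)
  rw [hcl, zero_mul, h0 _ _ le_rfl, g.symm_apply_apply]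

lemma step_of_one_le (h0 : ∀ z u, u ≤ (0:ℝ) → H' z u = z)
    (hlam01 : ∀ x, lam x ∈ Icc (0:ℝ) 1)
    (hF1 : ∀ x y t, (1:ℝ) ≤ t → F x y t = y) (x y : X) {t : ℝ} (ht : 1 ≤ t) :
    step H' g lam F x y t = y := by
  have hnot : ¬ (t ≤ lam x / 3) := by
    have := (hlam01 x).2; push_neg; linarith
  rw [step, if_neg hnot]
  by_cases h2 : t ≤ 1 - lam x / 3
  · have hl0 : lam x = 0 := le_antisymm (by linarith [(hlam01 x).1]) (hlam01 x).1
    rw [if_pos h2, if_pos (by rw [hl0]; norm_num)]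
    have hτ : (t - lam x/3)/(1 - 2*(lam x)/3) = t := by rw [hl0]; simp
    rw [hτ, hF1 x y t ht, hl0, umin_zero, h0 _ _ le_rfl, g.symm_apply_apply]
  · rw [if_neg h2]
    have hcl : clamp01 (3*(1-t)/(lam x)) = 0 := by
      rcases eq_or_lt_of_le (hlam01 x).1 with h | h
      · rw [← h, div_zero, clamp01_zero]
      · exact clamp01_of_nonpos (div_nonpos_of_nonpos_of_nonneg (by linarith) (hlam01 x).1)
    rw [hcl, zero_mul, h0 _ _ le_rfl, g.symm_apply_apply]

lemma step_freeze (h0 : ∀ z u, u ≤ (0:ℝ) → H' z u = z)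
    (hF0 : ∀ x y t, t ≤ (0:ℝ) → F x y t = x)
    (hF1 : ∀ x y t, (1:ℝ) ≤ t → F x y t = y)
    {x : X} (hx : lam x = 0) (y : X) (t : ℝ) :
    step H' g lam F x y t = F x y t := by
  rw [step, hx]
  simp only [zero_div, div_zero, clamp01_zero, umin_zero, mul_zero, zero_mul, sub_zero,
    mul_comm, zero_mul]
  by_cases ht : t ≤ 0
  · rw [if_pos ht, h0 _ _ le_rfl, g.symm_apply_apply, hF0 x y t ht]
  · by_cases ht1 : t ≤ 1
    · rw [if_neg ht, if_pos ht1, if_pos (by norm_num), div_one,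
        h0 _ _ le_rfl, g.symm_apply_apply]
    · rw [if_neg ht, if_neg ht1, h0 _ _ le_rfl, g.symm_apply_apply,
        hF1 x y t (by linarith)]

lemma step_cont (hH : Continuous fun p : X × ℝ => H' p.1 p.2)
    (h0 : ∀ z u, u ≤ (0:ℝ) → H' z u = z)
    (h1 : ∀ z u, (1:ℝ) ≤ u → H' z u = c)
    (hlam : Continuous lam) (hlam01 : ∀ x, lam x ∈ Icc (0:ℝ) 1)
    (hFc : Continuous fun q : X × X × ℝ => F q.1 q.2.1 q.2.2)
    (hF0 : ∀ x y t, t ≤ (0:ℝ) → F x y t = x)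
    (hF1 : ∀ x y t, (1:ℝ) ≤ t → F x y t = y) :
    Continuous fun q : X × X × ℝ => step H' g lam F q.1 q.2.1 q.2.2 := by
  have hden : ∀ z : X, (1 - 2*(lam z)/3) ≠ 0 := fun z => by
    have h2 := (hlam01 z).2; exact ne_of_gt (by linarith)
  have hτc : Continuous fun q : X × X × ℝ => (q.2.2 - lam q.1/3)/(1 - 2*(lam q.1)/3) :=
    Continuous.div (continuous_snd.snd.sub ((hlam.comp continuous_fst).div_const 3))
      (continuous_const.sub (((continuous_const.mul (hlam.comp continuous_fst)).div_const 3)))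
      (fun q => hden q.1)
  have hb1 : Continuous fun q : X × X × ℝ =>
      g.symm (H' (g q.1) (clamp01 (3*q.2.2/(lam q.1)) * umin (lam q.1))) := by
    exact g.symm.continuous.comp (hH.comp ((g.continuous.comp continuous_fst).prodMk
      (ramp_cont.comp (continuous_snd.snd.prodMk (hlam.comp continuous_fst)))))
  have hb3 : Continuous fun q : X × X × ℝ =>
      g.symm (H' (g q.2.1) (clamp01 (3*(1-q.2.2)/(lam q.1)) * umin (lam q.1))) := by
    exact g.symm.continuous.comp (hH.comp ((g.continuous.comp continuous_snd.fst).prodMk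
      (ramp_cont.comp ((continuous_const.sub continuous_snd.snd).prodMk
        (hlam.comp continuous_fst)))))
  have hbA : Continuous fun q : X × X × ℝ =>
      g.symm (H' (g (F q.1 q.2.1 ((q.2.2 - lam q.1/3)/(1 - 2*(lam q.1)/3))))
        (umin (lam q.1))) := by
    exact g.symm.continuous.comp (hH.comp (Continuous.prodMk
      (g.continuous.comp (hFc.comp (continuous_fst.prodMk
        (continuous_snd.fst.prodMk hτc))))
      (umin_cont.comp (hlam.comp continuous_fst))))
  have hbB : Continuous fun q : X × X × ℝ =>
      g.symm (H' (gpath H' (g q.1) (g q.2.1) ((q.2.2 - lam q.1/3)/(1 - 2*(lam q.1)/3)))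
        (umin (lam q.1))) := by
    exact g.symm.continuous.comp (hH.comp (Continuous.prodMk
      ((gpath_cont hH h1).comp ((g.continuous.comp continuous_fst).prodMk
        ((g.continuous.comp continuous_snd.fst).prodMk hτc)))
      (umin_cont.comp (hlam.comp continuous_fst))))
  simp only [step]
  refine Continuous.if_le hb1 ?_ continuous_snd.snd ((hlam.comp continuous_fst).div_const 3) ?_
  · -- the else-branch (nested ifs) is continuous
    refine Continuous.if_le ?_ hb3 continuous_snd.snd
      (continuous_const.sub ((hlam.comp continuous_fst).div_const 3)) ?_
    · exact Continuous.if_le hbA hbB (hlam.comp continuous_fst) continuous_const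
        (fun q hq => by
          have hu : (1:ℝ) ≤ umin (lam q.1) := by rw [hq, umin_half]
          rw [h1 _ _ hu, h1 _ _ hu])
    · -- frontier t = 1 - lam/3
      intro q hq
      obtain ⟨x, y, t⟩ := q
      simp only at hq ⊢
      by_cases hl : lam x = 0
      · rw [if_pos (by rw [hl]; norm_num)]
        have ht1 : t = 1 := by rw [hq, hl]; norm_num
        have hτ : (t - lam x/3)/(1 - 2*(lam x)/3) = 1 := by
          rw [ht1, hl]; norm_num
        rw [hτ, hF1 x y 1 le_rfl, hl, umin_zero, h0 _ _ le_rfl,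
          ht1, show (3:ℝ)*(1-1)/0 = 0 by norm_num, clamp01_zero, zero_mul, h0 _ _ le_rfl]
      · have hlpos : 0 < lam x := lt_of_le_of_ne (hlam01 x).1 (Ne.symm hl)
        have hτ : (t - lam x/3)/(1 - 2*(lam x)/3) = 1 := by
          rw [hq, show (1 - lam x/3 - lam x/3) = (1 - 2*(lam x)/3) by ring]
          exact div_self (hden x)
        have hcl : clamp01 (3*(1-t)/(lam x)) = 1 := by
          rw [hq]
          have : (3:ℝ)*(1-(1 - lam x / 3))/(lam x) = 1 := by
            rw [show (3:ℝ)*(1-(1 - lam x / 3)) = lam x by ring]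
            exact div_self hl
          rw [this, clamp01_of_one_le le_rfl]
        rw [hcl, one_mul]
        by_cases hhalf : lam x ≤ 2⁻¹
        · rw [if_pos hhalf, hτ, hF1 x y 1 le_rfl]
        · rw [if_neg hhalf, hτ, gpath_of_one_le h0 _ _ le_rfl]
  · -- frontier t = lam/3
    intro q hq
    obtain ⟨x, y, t⟩ := q
    simp only at hq ⊢
    have hin : t ≤ 1 - lam x / 3 := by
      have h2 := (hlam01 x).2; rw [hq]; linarith
    rw [if_pos hin]
    by_cases hl : lam x = 0
    · have ht0 : t = 0 := by rw [hq, hl]; norm_num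
      rw [if_pos (by rw [hl]; norm_num), ht0, hl]
      have hτ : ((0:ℝ) - 0/3)/(1 - 2*0/3) = 0 := by norm_num
      rw [hτ, hF0 x y 0 le_rfl, umin_zero, mul_zero, h0 _ _ le_rfl]
    · have hlpos : 0 < lam x := lt_of_le_of_ne (hlam01 x).1 (Ne.symm hl)
      have hcl : clamp01 (3*t/(lam x)) = 1 := by
        rw [hq]
        have : (3:ℝ)*(lam x / 3)/(lam x) = 1 := by field_simp
        rw [this, clamp01_of_one_le le_rfl]
      have hτ : (t - lam x/3)/(1 - 2*(lam x)/3) = 0 := by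
        rw [hq]; simp
      rw [hcl, one_mul, hτ]
      by_cases hhalf : lam x ≤ 2⁻¹
      · rw [if_pos hhalf, hF0 x y 0 le_rfl]
      · rw [if_neg hhalf, gpath_of_nonpos h0 _ _ le_rfl]

lemma step_cases (x y : X) (t : ℝ) : ∃ v : ℝ,
    step H' g lam F x y t = g.symm (H' (g x) v) ∨
    step H' g lam F x y t = g.symm (H' (g y) v) ∨
    (lam x ≤ 2⁻¹ ∧ ∃ τ, step H' g lam F x y t = g.symm (H' (g (F x y τ)) v)) ∨
    (∃ w, step H' g lam F x y t = g.symm (H' (H' (g x) w) v) ∨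
          step H' g lam F x y t = g.symm (H' (H' (g y) w) v)) := by
  rw [step]
  split
  · exact ⟨_, Or.inl rfl⟩
  · split
    · split
      · exact ⟨_, Or.inr (Or.inr (Or.inl ⟨by assumption, _, rfl⟩))⟩
      · obtain ⟨w, hw | hw⟩ :=
          gpath_cases (H' := H') (g x) (g y) ((t - lam x/3)/(1 - 2*(lam x)/3))
        · rw [hw]; exact ⟨_, Or.inr (Or.inr (Or.inr ⟨w, Or.inl rfl⟩))⟩
        · rw [hw]; exact ⟨_, Or.inr (Or.inr (Or.inr ⟨w, Or.inr rfl⟩))⟩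
    · exact ⟨_, Or.inr (Or.inl rfl)⟩

end step

/-- the sequence of approximations -/
def seqR (H' : X → ℝ → X) (g : ℕ → X ≃ᵢ X) (lam : ℕ → X → ℝ) : ℕ → X → X → ℝ → X
  | 0 => fun x y t => gpath H' x y t
  | (k+1) => step H' (g (k+1-1)) (lam k) (seqR H' g lam k)

section seqR
variable {H' : X → ℝ → X} {c : X} {g : ℕ → X ≃ᵢ X} {lam : ℕ → X → ℝ}

lemma seqR_succ (k : ℕ) :
    seqR H' g lam (k+1) = step H' (g k) (lam k) (seqR H' g lam k) := rfl

lemma seqR_props (hH : Continuous fun p : X × ℝ => H' p.1 p.2)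
    (h0 : ∀ z u, u ≤ (0:ℝ) → H' z u = z)
    (h1 : ∀ z u, (1:ℝ) ≤ u → H' z u = c)
    (hlam : ∀ k, Continuous (lam k)) (hlam01 : ∀ k x, lam k x ∈ Icc (0:ℝ) 1) :
    ∀ k, (Continuous fun q : X × X × ℝ => seqR H' g lam k q.1 q.2.1 q.2.2) ∧
      (∀ x y t, t ≤ (0:ℝ) → seqR H' g lam k x y t = x) ∧
      (∀ x y t, (1:ℝ) ≤ t → seqR H' g lam k x y t = y) := by
  intro k
  induction k with
  | zero =>
    exact ⟨gpath_cont hH h1, fun x y t ht => gpath_of_nonpos h0 x y ht,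
      fun x y t ht => gpath_of_one_le h0 x y ht⟩
  | succ k ih =>
    rw [seqR_succ]
    exact ⟨step_cont hH h0 h1 (hlam k) (hlam01 k) ih.1 ih.2.1 ih.2.2,
      fun x y t ht => step_of_nonpos h0 (hlam01 k) x y ht,
      fun x y t ht => step_of_one_le h0 (hlam01 k) ih.2.2 x y ht⟩

lemma seqR_freeze (h0 : ∀ z u, u ≤ (0:ℝ) → H' z u = z)
    (hH : Continuous fun p : X × ℝ => H' p.1 p.2)
    (h1 : ∀ z u, (1:ℝ) ≤ u → H' z u = c)
    (hlam : ∀ k, Continuous (lam k)) (hlam01 : ∀ k x, lam k x ∈ Icc (0:ℝ) 1)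
    {k : ℕ} {x : X} (hx : lam k x = 0) (y : X) (t : ℝ) :
    seqR H' g lam (k+1) x y t = seqR H' g lam k x y t := by
  rw [seqR_succ]
  exact step_freeze h0 (seqR_props hH h0 h1 hlam hlam01 k).2.1
    (seqR_props hH h0 h1 hlam hlam01 k).2.2 hx y t

end seqR

end CoarseHtpyAux

end

/-- A proper `π`-space: a metric space `X` in which closed balls are compact, with a group
`π` acting by isometries, cocompactly and properly discontinuously. -/
structure ProperPiSpace (π : Type*) [Group π] (X : Type*) [MetricSpace X] where
  /-- the action of `π` on `X` by isometries -/
  T : π → X ≃ᵢ X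
  /-- `T α ∘ T β = T (α * β)` -/
  hmul : ∀ α β : π, ∀ x : X, T α (T β x) = T (α * β) x
  /-- closed metric balls are compact -/
  properBalls : ∀ (x : X) (r : ℝ), IsCompact (Metric.closedBall x r)
  /-- the action is cocompact -/
  cocompact : ∃ K : Set X, IsCompact K ∧ ∀ x : X, ∃ α : π, T α x ∈ K
  /-- the action is properly discontinuous -/
  properlyDisc : ∀ K : Set X, IsCompact K → {α : π | ((T α) '' K ∩ K).Nonempty}.Finite

open CoarseHtpyAux Set Metric in
/-- if `(X, π)` is a proper `π`-space and `X` is contractible, then there is a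
continuous `R : X × X × [0,1] → X` with `R(x,y,0) = x`, `R(x,y,1) = y`, such that for every
`N < ∞` there is `M < ∞` with: `d(x,y) < N` implies `d(x, R(x,y,t)) < M` for all `t ∈ [0,1]`. -/
theorem exists_coarse_homotopy
    {π : Type*} [Group π] {X : Type*} [MetricSpace X]
    (S : ProperPiSpace π X) (hX : ContractibleSpace X) :
    ∃ R : X → X → ℝ → X,
      ContinuousOn (fun q : X × X × ℝ => R q.1 q.2.1 q.2.2)
        (Set.univ ×ˢ Set.univ ×ˢ Set.Icc (0 : ℝ) 1) ∧
      (∀ x y : X, R x y 0 = x) ∧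
      (∀ x y : X, R x y 1 = y) ∧
      ∀ N : ℝ, ∃ M : ℝ, ∀ x y : X, dist x y < N →
        ∀ t ∈ Set.Icc (0 : ℝ) 1, dist x (R x y t) < M := by
  classical
  rcases isEmpty_or_nonempty X with hEmpty | hne
  · exact ⟨fun x _ _ => x, continuous_fst.continuousOn, fun x _ => rfl,
      fun x _ => hEmpty.elim x, fun N => ⟨0, fun x => hEmpty.elim x⟩⟩
  obtain ⟨x₀⟩ := hne
  haveI : ProperSpace X := ⟨S.properBalls⟩
  -- the contraction
  obtain ⟨cc, hcc⟩ := id_nullhomotopic X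
  obtain ⟨Hh⟩ := hcc
  set H' : X → ℝ → X := fun z u => Hh (Set.projIcc 0 1 zero_le_one u, z) with hH'def
  have hH : Continuous fun p : X × ℝ => H' p.1 p.2 :=
    Hh.continuous.comp ((continuous_projIcc.comp continuous_snd).prodMk continuous_fst)
  have h0 : ∀ z u, u ≤ (0:ℝ) → H' z u = z := by
    intro z u hu
    simp only [hH'def]
    rw [Set.projIcc_of_le_left _ hu]
    simpa using Hh.apply_zero z
  have h1 : ∀ z u, (1:ℝ) ≤ u → H' z u = cc := by
    intro z u hu
    simp only [hH'def]
    rw [Set.projIcc_of_right_le _ hu]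
    simpa using Hh.apply_one z
  -- countability of π
  haveI hcount : Countable π := by
    have hfin : ∀ n : ℕ, {α : π | S.T α x₀ ∈ Metric.closedBall x₀ n}.Finite := by
      intro n
      apply (S.properlyDisc (Metric.closedBall x₀ n) (S.properBalls x₀ n)).subset
      intro α hα
      exact ⟨S.T α x₀, ⟨x₀, Metric.mem_closedBall_self (by positivity), rfl⟩, hα⟩
    have huniv : (Set.univ : Set π) = ⋃ n : ℕ, {α | S.T α x₀ ∈ Metric.closedBall x₀ n} := by
      ext α
      simp only [Set.mem_univ, true_iff, Set.mem_iUnion]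
      refine ⟨⌈dist (S.T α x₀) x₀⌉₊, ?_⟩
      simpa [Metric.mem_closedBall] using Nat.le_ceil (dist (S.T α x₀) x₀)
    rw [← Set.countable_univ_iff, huniv]
    exact Set.countable_iUnion (fun n => (hfin n).countable)
  obtain ⟨f, hf⟩ := exists_injective_nat π
  set e : ℕ → π := fun k => if h : ∃ γ, f γ = k then h.choose else 1 with he_def
  have hfe : ∀ k : ℕ, (∃ γ, f γ = k) → f (e k) = k := by
    intro k h
    simp only [he_def, dif_pos h]
    exact h.choose_spec
  have he : ∀ γ, e (f γ) = γ := fun γ => hf (hfe (f γ) ⟨γ, rfl⟩)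
  set gseq : ℕ → X ≃ᵢ X := fun k => S.T (e k) with hgseqdef
  -- the compact sets
  obtain ⟨K, hKc, hKcov⟩ := S.cocompact
  have hKne : K.Nonempty := by obtain ⟨α, hα⟩ := hKcov x₀; exact ⟨_, hα⟩
  have hcpt : ∀ (A : Set X), IsCompact A → A.Nonempty → ∀ r : ℝ,
      IsCompact {z | Metric.infDist z A ≤ r} := by
    intro A hA hAne r
    obtain ⟨a, ha⟩ := hAne
    obtain ⟨ρ, hρ⟩ := hA.isBounded.subset_closedBall a
    apply IsCompact.of_isClosed_subset (S.properBalls a (ρ + r + 1))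
      (isClosed_le (Metric.continuous_infDist_pt A) continuous_const)
    intro z hz
    have hlt : Metric.infDist z A < r + 1 := lt_of_le_of_lt hz (by linarith)
    obtain ⟨w, hwA, hw⟩ := (Metric.infDist_lt_iff ⟨a, ha⟩).mp hlt
    have hwa : dist w a ≤ ρ := by simpa [Metric.mem_closedBall] using hρ hwA
    simp only [Metric.mem_closedBall]
    calc dist z a ≤ dist z w + dist w a := dist_triangle _ _ _
      _ ≤ ρ + r + 1 := by linarith
  set K1 : Set X := {z | Metric.infDist z K ≤ 1} with hK1def
  set K2 : Set X := {z | Metric.infDist z K1 ≤ 1} with hK2def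
  have hK1sub : K ⊆ K1 := fun z hz => by
    simp only [hK1def, Set.mem_setOf_eq, Metric.infDist_zero_of_mem hz]; norm_num
  have hK1ne : K1.Nonempty := hKne.mono hK1sub
  have hK1cpt : IsCompact K1 := hcpt K hKc hKne 1
  have hK2cpt : IsCompact K2 := hcpt K1 hK1cpt hK1ne 1
  have hK12 : K1 ⊆ K2 := fun z hz => by
    simp only [hK2def, Set.mem_setOf_eq, Metric.infDist_zero_of_mem hz]; norm_num
  have hK2ne : K2.Nonempty := hK1ne.mono hK12
  -- the bump functions
  set lam : ℕ → X → ℝ := fun k x =>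
    if ∃ γ, f γ = k then clamp01 (1 - Metric.infDist (gseq k x) K1) else 0 with hlamdef
  have hlamc : ∀ k, Continuous (lam k) := by
    intro k
    by_cases h : ∃ γ, f γ = k
    · simp only [hlamdef, if_pos h]
      exact clamp01_cont.comp (continuous_const.sub
        ((Metric.continuous_infDist_pt K1).comp (gseq k).continuous))
    · simp only [hlamdef, if_neg h]
      exact continuous_const
  have hlam01 : ∀ k x, lam k x ∈ Set.Icc (0:ℝ) 1 := by
    intro k x
    by_cases h : ∃ γ, f γ = k
    · simp only [hlamdef, if_pos h]; exact clamp01_mem _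
    · simp only [hlamdef, if_neg h]; exact ⟨le_rfl, zero_le_one⟩
  have hlam_ne : ∀ k x, lam k x ≠ 0 → (∃ γ, f γ = k) ∧ gseq k x ∈ K2 := by
    intro k x h
    by_cases hg : ∃ γ, f γ = k
    · refine ⟨hg, ?_⟩
      simp only [hlamdef, if_pos hg] at h
      by_contra hK2mem
      simp only [hK2def, Set.mem_setOf_eq, not_le] at hK2mem
      exact h (clamp01_of_nonpos (by linarith))
    · simp only [hlamdef, if_neg hg] at h
      exact absurd rfl h
  have hlam_one : ∀ γ x, S.T γ x ∈ K1 → lam (f γ) x = 1 := by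
    intro γ x hx
    have hg : ∃ γ', f γ' = f γ := ⟨γ, rfl⟩
    simp only [hlamdef, if_pos hg, hgseqdef, he γ]
    rw [Metric.infDist_zero_of_mem hx, sub_zero, clamp01_of_one_le le_rfl]
  -- finiteness of the active sets
  have hfinA : ∀ x : X, {γ : π | S.T γ x ∈ K2}.Finite := by
    intro x
    apply (S.properlyDisc _ (hK2cpt.union isCompact_singleton)).subset
    intro γ hγ
    exact ⟨S.T γ x, ⟨x, Or.inr rfl, rfl⟩, Or.inl hγ⟩
  have hfinS : ∀ x : X, {k : ℕ | lam k x ≠ 0}.Finite := by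
    intro x
    apply ((hfinA x).image f).subset
    intro k hk
    obtain ⟨hg, hmem⟩ := hlam_ne _ _ hk
    exact ⟨e k, hmem, hfe k hg⟩
  set κ : X → ℕ := fun x => (hfinS x).toFinset.sup id + 1 with hκdef
  have hκ : ∀ x k, κ x ≤ k → lam k x = 0 := by
    intro x k hk
    by_contra h
    have h2 : k ∈ (hfinS x).toFinset := (hfinS x).mem_toFinset.mpr h
    have h3 := Finset.le_sup (f := id) h2
    simp only [hκdef, id] at h3 hk
    omega
  -- the approximating sequence
  set Rs : ℕ → X → X → ℝ → X := seqR H' gseq lam with hRsdef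
  have hprops := seqR_props (g := gseq) hH h0 h1 hlamc hlam01
  have hfreeze : ∀ k x, lam k x = 0 → ∀ y t, Rs (k+1) x y t = Rs k x y t :=
    fun k x hx y t => seqR_freeze h0 hH h1 hlamc hlam01 hx y t
  have hstab : ∀ (x : X) (k j : ℕ), k ≤ j → (∀ i, k ≤ i → lam i x = 0) →
      ∀ y t, Rs j x y t = Rs k x y t := by
    intro x k j hkj hzero y t
    induction j, hkj using Nat.le_induction with
    | base => rfl
    | succ n hn ih => rw [hfreeze n x (hzero n hn) y t, ih]
  set R : X → X → ℝ → X := fun x y t => Rs (κ x) x y t with hRdef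
  refine ⟨R, ?_, ?_, ?_, ?_⟩
  · -- continuity
    apply Continuous.continuousOn
    rw [continuous_iff_continuousAt]
    rintro ⟨x₁, y₁, t₁⟩
    have hK4 : IsCompact (K2 ∪ Metric.closedBall x₁ 1) := hK2cpt.union (S.properBalls x₁ 1)
    have hW := S.properlyDisc _ hK4
    set n₀ : ℕ := (hW.image f).toFinset.sup id + 1 with hn₀def
    have hkey : ∀ x ∈ Metric.ball x₁ 1, ∀ k, n₀ ≤ k → lam k x = 0 := by
      intro x hx k hk
      by_contra h
      obtain ⟨hg, hmem⟩ := hlam_ne _ _ h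
      have hWk : e k ∈ {α : π |
          ((S.T α) '' (K2 ∪ Metric.closedBall x₁ 1) ∩ (K2 ∪ Metric.closedBall x₁ 1)).Nonempty} :=
        ⟨S.T (e k) x, ⟨x, Or.inr (Metric.ball_subset_closedBall hx), rfl⟩, Or.inl hmem⟩
      have h2 : k ∈ (hW.image f).toFinset :=
        (hW.image f).mem_toFinset.mpr ⟨e k, hWk, hfe k hg⟩
      have h3 := Finset.le_sup (f := id) h2
      simp only [hn₀def, id] at h3 hk
      omega
    have heq : ∀ x ∈ Metric.ball x₁ 1, ∀ y t, R x y t = Rs n₀ x y t := by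
      intro x hx y t
      have h1' : Rs (max n₀ (κ x)) x y t = Rs (κ x) x y t :=
        hstab x (κ x) _ (le_max_right _ _) (fun i hi => hκ x i hi) y t
      have h2' : Rs (max n₀ (κ x)) x y t = Rs n₀ x y t :=
        hstab x n₀ _ (le_max_left _ _) (fun i hi => hkey x hx i hi) y t
      rw [hRdef]
      dsimp only
      rw [← h1', h2']
    have hev : (fun q : X × X × ℝ => R q.1 q.2.1 q.2.2) =ᶠ[nhds (x₁,y₁,t₁)]
        (fun q : X × X × ℝ => Rs n₀ q.1 q.2.1 q.2.2) := by
      have hmem : (Metric.ball x₁ 1) ×ˢ ((Set.univ : Set X) ×ˢ (Set.univ : Set ℝ)) ∈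
          nhds (x₁, y₁, t₁) :=
        prod_mem_nhds (Metric.ball_mem_nhds _ one_pos) (prod_mem_nhds Filter.univ_mem Filter.univ_mem)
      filter_upwards [hmem] with q hq
      exact heq q.1 hq.1 q.2.1 q.2.2
    rw [continuousAt_congr hev]
    exact (hprops n₀).1.continuousAt
  · intro x y
    exact (hprops (κ x)).2.1 x y 0 le_rfl
  · intro x y
    exact (hprops (κ x)).2.2 x y 1 le_rfl
  · -- the track bounds
    intro N
    set C : ℝ → Set X := fun r => {z | Metric.infDist z K2 ≤ max r 0} with hCdef
    have hCcpt : ∀ r, IsCompact (C r) := fun r => hcpt K2 hK2cpt hK2ne _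
    have hCk2 : ∀ r, K2 ⊆ C r := fun r z hz => by
      simp only [hCdef, Set.mem_setOf_eq, Metric.infDist_zero_of_mem hz]
      exact le_max_right _ _
    have hCne : ∀ r, (C r).Nonempty := fun r => hK2ne.mono (hCk2 r)
    have hCsub : ∀ r r', r ≤ r' → C r ⊆ C r' := fun r r' h z hz =>
      le_trans hz (max_le_max h le_rfl)
    set Λ : ℝ → ℝ := fun r =>
      sSup ((fun p : X × ℝ => dist p.1 (H' p.1 p.2)) '' ((C r) ×ˢ Set.Icc (0:ℝ) 1)) with hΛdef
    have hdistc : Continuous fun p : X × ℝ => dist p.1 (H' p.1 p.2) := continuous_fst.dist hH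
    have hbdd : ∀ r, BddAbove
        ((fun p : X × ℝ => dist p.1 (H' p.1 p.2)) '' ((C r) ×ˢ Set.Icc (0:ℝ) 1)) :=
      fun r => ((hCcpt r).prod isCompact_Icc).bddAbove_image hdistc.continuousOn
    have hΛkey : ∀ r z, z ∈ C r → ∀ v : ℝ, dist z (H' z v) ≤ Λ r := by
      intro r z hz v
      have hv : H' z v = H' z ((Set.projIcc 0 1 zero_le_one v : Set.Icc (0:ℝ) 1) : ℝ) := by
        simp only [hH'def, Set.projIcc_val]
      rw [hv]
      exact le_csSup (hbdd r) ⟨(z, _), ⟨hz, (Set.projIcc 0 1 zero_le_one v).2⟩, rfl⟩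
    have hΛmono : ∀ r r', r ≤ r' → Λ r ≤ Λ r' := fun r r' h =>
      csSup_le_csSup (hbdd r')
        (((hCne r).prod (Set.nonempty_Icc.mpr zero_le_one)).image _)
        (Set.image_mono (Set.prod_mono (hCsub r r' h) subset_rfl))
    have hΛ0 : ∀ r, 0 ≤ Λ r := by
      intro r
      obtain ⟨z, hz⟩ := hCne r
      have h2 := hΛkey r z hz 0
      rw [h0 z 0 le_rfl, dist_self] at h2
      exact h2
    set B₀ : ℝ := max (Λ 0) (N + Λ N) with hB₀def
    have hB₀0 : 0 ≤ B₀ := le_trans (hΛ0 0) (le_max_left _ _)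
    set β : ℝ → ℝ := fun B => max B B₀ + Λ (max B B₀) with hβdef
    have hβ1 : ∀ B, 0 ≤ B → B ≤ β B := by
      intro B hB
      have h2 := hΛ0 (max B B₀)
      have h3 := le_max_left B B₀
      simp only [hβdef]
      linarith
    have hβpos : ∀ B, 0 ≤ B → 0 ≤ β B := fun B hB => le_trans hB (hβ1 B hB)
    have hβmono : ∀ B B', B ≤ B' → β B ≤ β B' := by
      intro B B' h
      have h1' : max B B₀ ≤ max B' B₀ := max_le_max h le_rfl
      have h2 := hΛmono _ _ h1'
      simp only [hβdef]
      linarith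
    have hiter0 : ∀ n, 0 ≤ β^[n] 0 := by
      intro n
      induction n with
      | zero => simp
      | succ n ih => rw [Function.iterate_succ_apply']; exact hβpos _ ih
    have hitermono : ∀ i j, i ≤ j → β^[i] (0:ℝ) ≤ β^[j] 0 := by
      intro i j hij
      induction j, hij using Nat.le_induction with
      | base => exact le_rfl
      | succ n hn ih =>
        rw [Function.iterate_succ_apply']
        exact le_trans ih (hβ1 _ (hiter0 n))
    have hF2 := S.properlyDisc K2 hK2cpt
    set m : ℕ := hF2.toFinset.card with hmdef
    refine ⟨β^[m+1] 0 + 1, ?_⟩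
    intro x y hxy t ht
    have hN0 : 0 ≤ N := le_trans dist_nonneg hxy.le
    have hNd : dist x y ≤ N := hxy.le
    -- the reset index
    obtain ⟨γ₀, hγ₀⟩ := hKcov x
    set r : ℕ := f γ₀ with hrdef
    have hreset : lam r x = 1 := hlam_one γ₀ x (hK1sub hγ₀)
    have hγ₀K2 : S.T γ₀ x ∈ K2 := hK12 (hK1sub hγ₀)
    -- the core per-step estimate
    have hcore : ∀ k B, 0 ≤ B → lam k x ≠ 0 →
        ((lam k x ≤ 2⁻¹) → ∀ t', dist x (Rs k x y t') ≤ B) →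
        ∀ t', dist x (Rs (k+1) x y t') ≤ β B := by
      intro k B hB hne hTB t'
      obtain ⟨hg, hgk⟩ := hlam_ne k x hne
      have hgyC : gseq k y ∈ C N := by
        simp only [hCdef, Set.mem_setOf_eq]
        refine le_trans (Metric.infDist_le_dist_of_mem hgk) ?_
        rw [(gseq k).dist_eq]
        rw [dist_comm]
        exact le_trans hNd (le_max_left _ _)
      have hdsymm : ∀ z : X, dist x ((gseq k).symm z) = dist (gseq k x) z := by
        intro z
        conv_lhs => rw [← (gseq k).symm_apply_apply x]
        exact (gseq k).symm.dist_eq _ _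
      have hbound : ∀ z v', dist (gseq k x) z ≤ max B B₀ →
          dist x ((gseq k).symm (H' z v')) ≤ β B := by
        intro z v' hz
        rw [hdsymm]
        have hzC : z ∈ C (max B B₀) := by
          simp only [hCdef, Set.mem_setOf_eq]
          refine le_trans ?_ (le_max_left _ _)
          refine le_trans ?_ hz
          rw [dist_comm] at hz ⊢
          exact le_trans (Metric.infDist_le_dist_of_mem hgk) (by rw [dist_comm])
        calc dist (gseq k x) (H' z v')
            ≤ dist (gseq k x) z + dist z (H' z v') := dist_triangle _ _ _
          _ ≤ max B B₀ + Λ (max B B₀) := add_le_add hz (hΛkey _ z hzC v')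
          _ = β B := rfl
      have hstep : Rs (k+1) x y t' = step H' (gseq k) (lam k) (Rs k) x y t' := rfl
      obtain ⟨v, hcase⟩ := step_cases (H' := H') (g := gseq k) (lam := lam k)
        (F := Rs k) x y t'
      rw [hstep]
      rcases hcase with hc | hc | ⟨hhalf, τ, hc⟩ | ⟨w, hc | hc⟩
      · rw [hc]
        exact hbound _ v (by rw [dist_self]; exact le_max_of_le_right hB₀0)
      · rw [hc]
        refine hbound _ v ?_
        rw [(gseq k).dist_eq]
        refine le_trans hNd (le_trans ?_ (le_max_right B B₀))
        have := hΛ0 N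
        simp only [hB₀def]
        exact le_max_of_le_right (by linarith)
      · rw [hc]
        refine hbound _ v ?_
        rw [(gseq k).dist_eq]
        exact le_trans (hTB hhalf τ) (le_max_left _ _)
      · rw [hc]
        refine hbound _ v ?_
        have hgxC : gseq k x ∈ C 0 := hCk2 0 hgk
        refine le_trans (hΛkey 0 _ hgxC w) ?_
        exact le_max_of_le_right (le_trans (le_max_left _ _) le_rfl)
      · rw [hc]
        refine hbound _ v ?_
        calc dist (gseq k x) (H' (gseq k y) w)
            ≤ dist (gseq k x) (gseq k y) + dist (gseq k y) (H' (gseq k y) w) :=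
              dist_triangle _ _ _
          _ ≤ N + Λ N := by
              refine add_le_add ?_ (hΛkey N _ hgyC w)
              rw [(gseq k).dist_eq]; exact hNd
          _ ≤ max B B₀ := le_max_of_le_right (le_max_right _ _)
    -- the counting function
    have hmain : ∀ k, r + 1 ≤ k → ∀ t', dist x (Rs k x y t') ≤
        β^[((Finset.Ico (r+1) k).filter (fun j => lam j x ≠ 0)).card + 1] 0 := by
      intro k hk
      induction k, hk using Nat.le_induction with
      | base =>
        intro t'
        rw [Finset.Ico_self, Finset.filter_empty, Finset.card_empty]
        simp only [Nat.zero_add, Function.iterate_one]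
        refine hcore r 0 le_rfl (by rw [hreset]; norm_num) ?_ t'
        intro hhalf
        rw [hreset] at hhalf
        norm_num at hhalf
      | succ n hn ih =>
        intro t'
        have hIco : Finset.Ico (r+1) (n+1) = insert n (Finset.Ico (r+1) n) :=
          Nat.Ico_succ_right_eq_insert_Ico hn
        by_cases hz : lam n x = 0
        · rw [hfreeze n x hz y t', hIco, Finset.filter_insert,
            if_neg (by simp [hz])]
          exact ih t'
        · have hnmem : n ∉ (Finset.Ico (r+1) n).filter (fun j => lam j x ≠ 0) := by
            intro hmem
            have := (Finset.mem_filter.mp hmem).1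
            simp at this
          rw [hIco, Finset.filter_insert, if_pos hz,
            Finset.card_insert_of_notMem hnmem]
          have h2 : β^[((Finset.Ico (r+1) n).filter (fun j => lam j x ≠ 0)).card + 1 + 1] (0:ℝ)
              = β (β^[((Finset.Ico (r+1) n).filter (fun j => lam j x ≠ 0)).card + 1] 0) :=
            Function.iterate_succ_apply' β _ 0
          rw [h2]
          exact hcore n _ (hiter0 _) hz (fun _ => ih) t'
    -- counting: cnt (κ x) ≤ m
    have hκr : r + 1 ≤ κ x := by
      have h2 : r ∈ (hfinS x).toFinset := (hfinS x).mem_toFinset.mpr (by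
        simp only [Set.mem_setOf_eq, hreset]; norm_num)
      have h3 := Finset.le_sup (f := id) h2
      simp only [hκdef, id] at h3 ⊢
      omega
    have hcntle : ((Finset.Ico (r+1) (κ x)).filter (fun j => lam j x ≠ 0)).card ≤ m := by
      rw [hmdef]
      apply Finset.card_le_card_of_injOn (fun j => e j * γ₀⁻¹)
      · intro j hj
        have hjne : lam j x ≠ 0 := (Finset.mem_filter.mp hj).2
        obtain ⟨hg, hmem⟩ := hlam_ne j x hjne
        rw [Finset.mem_coe, Set.Finite.mem_toFinset]
        refine ⟨S.T (e j) x, ⟨S.T γ₀ x, hγ₀K2, ?_⟩, hmem⟩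
        rw [S.hmul]
        congr 1
        group
      · intro j hj j' hj' hjj'
        have hgj := (hlam_ne j x (Finset.mem_filter.mp hj).2).1
        have hgj' := (hlam_ne j' x (Finset.mem_filter.mp hj').2).1
        have : e j = e j' := by
          have := mul_right_cancel hjj'
          exact this
        rw [← hfe j hgj, ← hfe j' hgj', this]
    -- conclusion
    have hfinal := hmain (κ x) hκr t
    calc dist x (R x y t) = dist x (Rs (κ x) x y t) := rfl
      _ ≤ β^[((Finset.Ico (r+1) (κ x)).filter (fun j => lam j x ≠ 0)).card + 1] 0 := hfinal
      _ ≤ β^[m+1] 0 := hitermono _ _ (by omega)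
      _ < β^[m+1] 0 + 1 := by linarith
end
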